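/- arXiv:1010.1294 — 4 statements merged into one kernel-verified Lean document; each statement's English description precedes it below -/
import Mathlib

section
/- Let M be a positive-definite Hermitian n×n matrix and let ω ⊆ {1,…,n}. Let M_ω be the principal submatrix of M with rows and columns indexed by ω, and M_{ω̄} the principal submatrix indexed by the complement of ω. Then det(M) ≤ det(M_ω) · det(M_{ω̄}). -/
open Matrix
open scoped ComplexOrder

/-- A principal submatrix (along an injective map) of a positive definite matrix
is positive definite. -/
lemma posDef_submatrix_of_injective {m n : Type*} [Fintype m] [Fintype n]
    [DecidableEq m] [DecidableEq n] {M : Matrix n n ℂ} (hM : M.PosDef)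
    (e : m → n) (he : Function.Injective e) : (M.submatrix e e).PosDef := by
  set B : Matrix n m ℂ := (1 : Matrix n n ℂ).submatrix id e with hB
  have key : M.submatrix e e = Bᴴ * M * B := by
    have h1 : M = 1 * M * 1 := by simp
    rw [hB, conjTranspose_submatrix, conjTranspose_one]
    conv_lhs => rw [h1]
    rw [submatrix_mul (he₂ := Function.bijective_id),
      submatrix_mul (he₂ := Function.bijective_id), submatrix_id_id]
  refine posDef_iff_dotProduct_mulVec.mpr ⟨hM.1.submatrix e, fun x hx => ?_⟩
  have hBx : ∀ i, (B *ᵥ x) (e i) = x i := by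
    intro i
    simp [Matrix.mulVec, dotProduct, hB, Matrix.one_apply, he.eq_iff]
  have hBx0 : B *ᵥ x ≠ 0 := by
    intro h
    apply hx
    funext i
    have := hBx i
    rw [h] at this
    simpa using this.symm
  have hmv : (Bᴴ * M * B) *ᵥ x = Bᴴ *ᵥ (M *ᵥ (B *ᵥ x)) := by
    rw [← mulVec_mulVec, ← mulVec_mulVec]
  have : star x ⬝ᵥ (M.submatrix e e) *ᵥ x = star (B *ᵥ x) ⬝ᵥ M *ᵥ (B *ᵥ x) := by
    rw [key, hmv, dotProduct_mulVec, ← star_mulVec]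
  rw [this]
  exact hM.dotProduct_mulVec_pos hBx0

lemma posSemidef_det_eq_ofReal {m : Type*} [Fintype m] [DecidableEq m]
    {S : Matrix m m ℂ} (hS : S.PosSemidef) :
    S.det = ((∏ i, hS.1.eigenvalues i : ℝ) : ℂ) := by
  rw [hS.1.det_eq_prod_eigenvalues]
  push_cast
  rfl

lemma posSemidef_det_nonneg {m : Type*} [Fintype m] [DecidableEq m]
    {S : Matrix m m ℂ} (hS : S.PosSemidef) : (0 : ℂ) ≤ S.det := by
  rw [posSemidef_det_eq_ofReal hS]
  exact Complex.zero_le_real.mpr (Finset.prod_nonneg fun i _ => hS.eigenvalues_nonneg i)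

lemma one_le_det_one_add {m : Type*} [Fintype m] [DecidableEq m]
    {C : Matrix m m ℂ} (hC : C.PosSemidef) : (1 : ℂ) ≤ (1 + C).det := by
  set U : Matrix m m ℂ := (hC.1.eigenvectorUnitary : Matrix m m ℂ) with hU
  have hUU : U * star U = 1 := Matrix.mem_unitaryGroup_iff.mp hC.1.eigenvectorUnitary.2
  have hspec := hC.1.spectral_theorem
  have hone : (1 : Matrix m m ℂ) + C
      = U * (1 + diagonal (RCLike.ofReal ∘ hC.1.eigenvalues)) * star U := by
    rw [mul_add, add_mul, mul_one]
    rw [hUU]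
    exact congrArg (1 + ·) hspec
  have hdetU : U.det * (star U).det = 1 := by
    rw [← det_mul, hUU, det_one]
  have hd : ((1 : Matrix m m ℂ) + C).det
      = ((1 : Matrix m m ℂ) + diagonal (RCLike.ofReal ∘ hC.1.eigenvalues)).det := by
    rw [hone, det_mul, det_mul]
    calc U.det * ((1 : Matrix m m ℂ) + diagonal (RCLike.ofReal ∘ hC.1.eigenvalues)).det * (star U).det
        = ((1 : Matrix m m ℂ) + diagonal (RCLike.ofReal ∘ hC.1.eigenvalues)).det * (U.det * (star U).det) := by
          ring
      _ = _ := by rw [hdetU, mul_one]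
  have hdg : (1 : Matrix m m ℂ) + diagonal (RCLike.ofReal ∘ hC.1.eigenvalues)
      = diagonal (fun i => (1 : ℂ) + (hC.1.eigenvalues i : ℂ)) := by
    rw [← diagonal_one, ← diagonal_add]
    rfl
  have hprod : ∏ i, ((1 : ℂ) + (hC.1.eigenvalues i : ℂ))
      = ((∏ i, (1 + hC.1.eigenvalues i) : ℝ) : ℂ) := by
    push_cast
    rfl
  rw [hd, hdg, det_diagonal, hprod, show (1:ℂ) = ((1:ℝ):ℂ) by norm_num,
    Complex.real_le_real]
  calc (1:ℝ) = ∏ _i : m, (1:ℝ) := by simp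
    _ ≤ ∏ i, (1 + hC.1.eigenvalues i) :=
      Finset.prod_le_prod (by intros; norm_num)
        (fun i _ => le_add_of_nonneg_right (hC.eigenvalues_nonneg i))


open scoped MatrixOrder in
lemma det_le_det_add_posSemidef {m : Type*} [Fintype m] [DecidableEq m]
    {S T : Matrix m m ℂ} (hS : S.PosSemidef) (hT : T.PosSemidef) :
    S.det ≤ (S + T).det := by
  by_cases hdet : S.det = 0
  · rw [hdet]
    exact posSemidef_det_nonneg (hS.add hT)
  · set Q : Matrix m m ℂ := CFC.sqrt S with hQdef
    have hQpsd : Q.PosSemidef := (CFC.sqrt_nonneg S).posSemidef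
    have hQQ : Q * Q = S := CFC.sqrt_mul_sqrt_self S hS.nonneg
    have hQdet : Q.det ≠ 0 := by
      intro h
      apply hdet
      rw [← hQQ, det_mul, h, zero_mul]
    haveI : Invertible Q := invertibleOfIsUnitDet Q (isUnit_iff_ne_zero.mpr hQdet)
    have hQinv : Q * Q⁻¹ = 1 := mul_nonsing_inv Q (isUnit_iff_ne_zero.mpr hQdet)
    have hQinv' : Q⁻¹ * Q = 1 := nonsing_inv_mul Q (isUnit_iff_ne_zero.mpr hQdet)
    have hQherm : (Q⁻¹)ᴴ = Q⁻¹ := by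
      rw [conjTranspose_nonsing_inv, hQpsd.1.eq]
    set C : Matrix m m ℂ := Q⁻¹ * T * Q⁻¹ with hCdef
    have hCpsd : C.PosSemidef := by
      have := hT.mul_mul_conjTranspose_same Q⁻¹
      rwa [hQherm] at this
    have key : S + T = Q * (1 + C) * Q := by
      rw [mul_add, mul_one, add_mul, hQQ, hCdef]
      congr 1
      symm
      calc Q * (Q⁻¹ * T * Q⁻¹) * Q = (Q * Q⁻¹) * T * (Q⁻¹ * Q) := by
            simp only [Matrix.mul_assoc]
        _ = T := by rw [hQinv, hQinv', Matrix.one_mul, Matrix.mul_one]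
    have hSdet : S.det = Q.det * Q.det := by rw [← hQQ, det_mul]
    calc S.det = S.det * 1 := (mul_one _).symm
      _ ≤ S.det * (1 + C).det :=
        mul_le_mul_of_nonneg_left (one_le_det_one_add hCpsd) (posSemidef_det_nonneg hS)
      _ = (S + T).det := by
        rw [key, det_mul, det_mul, hSdet]
        ring

theorem hadamard_fischer {n : ℕ} (M : Matrix (Fin n) (Fin n) ℂ)
    (hM : M.PosDef) (ω : Finset (Fin n)) :
    M.det.re ≤
      (Matrix.det (M.submatrix (fun i : {i : Fin n // i ∈ ω} => (i : Fin n))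
          (fun i : {i : Fin n // i ∈ ω} => (i : Fin n)))).re *
      (Matrix.det (M.submatrix (fun i : {i : Fin n // i ∉ ω} => (i : Fin n))
          (fun i : {i : Fin n // i ∉ ω} => (i : Fin n)))).re := by
  classical
  set A := M.submatrix (fun i : {i : Fin n // i ∈ ω} => (i : Fin n))
    (fun i : {i : Fin n // i ∈ ω} => (i : Fin n)) with hAdef
  set D := M.submatrix (fun i : {i : Fin n // i ∉ ω} => (i : Fin n))
    (fun i : {i : Fin n // i ∉ ω} => (i : Fin n)) with hDdef
  have hA : A.PosDef := posDef_submatrix_of_injective hM _ Subtype.val_injective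
  have hD : D.PosDef := posDef_submatrix_of_injective hM _ Subtype.val_injective
  set e := Equiv.sumCompl (fun i : Fin n => i ∈ ω) with hedef
  set N := M.submatrix e e with hNdef
  have hN : N.PosDef := posDef_submatrix_of_injective hM e e.injective
  set B := N.toBlocks₁₂ with hBdef
  have hblocks : N = fromBlocks A B Bᴴ D := by
    ext i j
    cases i with
    | inl i =>
      cases j with
      | inl j => rfl
      | inr j => rfl
    | inr i =>
      cases j with
      | inl j =>
        show N (Sum.inr i) (Sum.inl j) = Bᴴ i j
        have h1 : Nᴴ (Sum.inr i) (Sum.inl j) = N (Sum.inr i) (Sum.inl j) := by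
          rw [hN.1.eq]
        rw [← h1]
        rfl
      | inr j => rfl
  haveI : Invertible A := invertibleOfIsUnitDet A (isUnit_iff_ne_zero.mpr hA.det_pos.ne')
  have hdetN : N.det = M.det := det_submatrix_equiv_self e M
  have hschur : N.det = A.det * (D - Bᴴ * A⁻¹ * B).det := by
    rw [hblocks, det_fromBlocks₁₁, invOf_eq_nonsing_inv]
  set S := D - Bᴴ * A⁻¹ * B with hSdef
  have hSpsd : S.PosSemidef := by
    rw [hblocks] at hN
    exact (PosDef.fromBlocks₁₁ B D hA).mp hN.posSemidef
  have hTpsd : (Bᴴ * A⁻¹ * B).PosSemidef :=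
    hA.inv.posSemidef.conjTranspose_mul_mul_same B
  have hSD : S + Bᴴ * A⁻¹ * B = D := sub_add_cancel D _
  have hle : M.det ≤ A.det * D.det := by
    rw [← hdetN, hschur]
    calc A.det * S.det ≤ A.det * (S + Bᴴ * A⁻¹ * B).det :=
          mul_le_mul_of_nonneg_left (det_le_det_add_posSemidef hSpsd hTpsd)
            (le_of_lt hA.det_pos)
      _ = A.det * D.det := by rw [hSD]
  have him : D.det.im = 0 := ((Complex.lt_def.mp hD.det_pos).2).symm
  have hre : M.det.re ≤ (A.det * D.det).re := (Complex.le_def.mp hle).1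
  rw [Complex.mul_re, him, mul_zero, sub_zero] at hre
  exact hre
end

section
/- Let A and B be Hilbert–Schmidt operators on a Hilbert space. Then |det₂(Id + A) − det₂(Id + B)| ≤ ‖A − B‖₂ · exp(½(‖A‖₂ + ‖B‖₂ + 1)²), where det₂ denotes the Carleman–Fredholm regularized determinant and ‖·‖₂ the Hilbert–Schmidt norm. -/
open Matrix

/-- The Hilbert–Schmidt (Frobenius) norm of a matrix. -/
noncomputable def hsNorm {n : ℕ} (A : Matrix (Fin n) (Fin n) ℂ) : ℝ :=
  Real.sqrt (∑ i, ∑ j, ‖A i j‖ ^ 2)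

/-- The Carleman–Fredholm regularized determinant `det₂(Id + A) = det(Id + A) e^{-Tr A}`. -/
noncomputable def det2 {n : ℕ} (A : Matrix (Fin n) (Fin n) ℂ) : ℂ :=
  Matrix.det (1 + A) * Complex.exp (-Matrix.trace A)

section HSNormLemmas

attribute [local instance] Matrix.frobeniusSeminormedAddCommGroup
  Matrix.frobeniusNormedAddCommGroup Matrix.frobeniusNormedSpace

lemma hsNorm_eq {n : ℕ} (A : Matrix (Fin n) (Fin n) ℂ) : hsNorm A = ‖A‖ := by
  rw [Matrix.frobenius_norm_def, hsNorm, Real.sqrt_eq_rpow]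
  norm_num

lemma hsNorm_nonneg {n : ℕ} (A : Matrix (Fin n) (Fin n) ℂ) : 0 ≤ hsNorm A :=
  Real.sqrt_nonneg _

lemma hsNorm_add_le {n : ℕ} (A B : Matrix (Fin n) (Fin n) ℂ) :
    hsNorm (A + B) ≤ hsNorm A + hsNorm B := by
  simp only [hsNorm_eq]; exact norm_add_le _ _

lemma hsNorm_smul {n : ℕ} (z : ℂ) (A : Matrix (Fin n) (Fin n) ℂ) :
    hsNorm (z • A) = ‖z‖ * hsNorm A := by
  simp only [hsNorm_eq]; exact norm_smul z A

lemma hsNorm_eq_zero {n : ℕ} {A : Matrix (Fin n) (Fin n) ℂ} (h : hsNorm A = 0) : A = 0 := by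
  rw [hsNorm_eq] at h; exact norm_eq_zero.mp h

lemma hsNorm_sub_comm {n : ℕ} (A B : Matrix (Fin n) (Fin n) ℂ) :
    hsNorm (A - B) = hsNorm (B - A) := by
  simp only [hsNorm_eq]; exact norm_sub_rev _ _

lemma hsNorm_sq {n : ℕ} (A : Matrix (Fin n) (Fin n) ℂ) :
    hsNorm A ^ 2 = ∑ i, ∑ j, ‖A i j‖ ^ 2 :=
  Real.sq_sqrt (Finset.sum_nonneg fun _ _ => Finset.sum_nonneg fun _ _ => sq_nonneg _)

end HSNormLemmas

/-- Hadamard's inequality: the determinant is bounded by the product of column norms. -/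
lemma norm_det_le_prod {n : ℕ} (M : Matrix (Fin n) (Fin n) ℂ) :
    ‖M.det‖ ≤ ∏ i, Real.sqrt (∑ j, ‖M j i‖ ^ 2) := by
  classical
  haveI : WellFoundedLT (Fin n) := inferInstance
  have hcard : Module.finrank ℂ (EuclideanSpace ℂ (Fin n)) = Fintype.card (Fin n) := by
    simp
  set f : Fin n → EuclideanSpace ℂ (Fin n) :=
    fun i => (WithLp.equiv 2 _).symm (fun j => M j i) with hf
  set e := InnerProductSpace.gramSchmidtOrthonormalBasis hcard f with he
  set b := EuclideanSpace.basisFun (Fin n) ℂ with hb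
  have h1 : b.toBasis.toMatrix f = M := by
    ext i j
    simp [Module.Basis.toMatrix_apply, hf, hb, EuclideanSpace.basisFun_repr, PiLp.toLp_apply]
  have h2 : b.toBasis.toMatrix f = b.toBasis.toMatrix (⇑e.toBasis) * e.toBasis.toMatrix f :=
    (Module.Basis.toMatrix_mul_toMatrix (b := b.toBasis) (b' := e.toBasis) f).symm
  have h3 : ‖b.toBasis.det (⇑e.toBasis)‖ = 1 := by
    rw [OrthonormalBasis.coe_toBasis]
    exact b.det_to_matrix_orthonormalBasis e
  have h4 : e.toBasis.det f = ∏ i, inner ℂ (e i) (f i) :=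
    InnerProductSpace.gramSchmidtOrthonormalBasis_det hcard f
  have hdet : ‖M.det‖ = ∏ i, ‖(inner ℂ (e i) (f i) : ℂ)‖ := by
    rw [← h1, ← Module.Basis.det_apply, Module.Basis.det_apply, h2, Matrix.det_mul, norm_mul,
      ← Module.Basis.det_apply, ← Module.Basis.det_apply, h3, one_mul, h4, norm_prod]
  rw [hdet]
  apply Finset.prod_le_prod (fun i _ => norm_nonneg _)
  intro i _
  calc ‖(inner ℂ (e i) (f i) : ℂ)‖ ≤ ‖e i‖ * ‖f i‖ := norm_inner_le_norm _ _
    _ = ‖f i‖ := by rw [e.orthonormal.1 i, one_mul]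
    _ = Real.sqrt (∑ j, ‖M j i‖ ^ 2) := by
        simp [hf, EuclideanSpace.norm_eq, PiLp.toLp_apply]

lemma sqrt_one_add_le_exp {t : ℝ} (_h : 0 ≤ 1 + t) : Real.sqrt (1 + t) ≤ Real.exp (t / 2) := by
  have h1 : (1 : ℝ) + t ≤ Real.exp t := by
    have := Real.add_one_le_exp t; linarith
  calc Real.sqrt (1 + t) ≤ Real.sqrt (Real.exp t) := Real.sqrt_le_sqrt h1
    _ = Real.exp (t / 2) := by
        rw [show Real.exp t = Real.exp (t / 2) ^ 2 by
          rw [sq, ← Real.exp_add]; ring_nf]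
        exact Real.sqrt_sq (Real.exp_pos _).le

/-- The fundamental bound `|det₂(1+A)| ≤ exp(‖A‖₂²/2)`. -/
lemma norm_det2_le {n : ℕ} (A : Matrix (Fin n) (Fin n) ℂ) :
    ‖det2 A‖ ≤ Real.exp (hsNorm A ^ 2 / 2) := by
  classical
  have hcol : ∀ i, Real.sqrt (∑ j, ‖(1 + A) j i‖ ^ 2) ≤
      Real.exp ((A i i).re + (∑ j, ‖A j i‖ ^ 2) / 2) := by
    intro i
    have hsum : ∑ j, ‖(1 + A) j i‖ ^ 2 = 1 + (2 * (A i i).re + ∑ j, ‖A j i‖ ^ 2) := by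
      have h1 : ∀ j, ‖(1 + A) j i‖ ^ 2 =
          (if j = i then 1 + 2 * (A i i).re else 0) + ‖A j i‖ ^ 2 := by
        intro j
        by_cases hj : j = i
        · subst hj
          simp only [Matrix.add_apply, Matrix.one_apply_eq, if_pos rfl]
          rw [Complex.sq_norm, Complex.sq_norm]
          simp [Complex.normSq_apply, Complex.add_re, Complex.add_im]
          ring
        · simp [Matrix.add_apply, Matrix.one_apply_ne hj, hj]
      simp_rw [h1]
      rw [Finset.sum_add_distrib, Finset.sum_ite_eq' Finset.univ i]
      simp; ring
    rw [hsum]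
    have := sqrt_one_add_le_exp (t := 2 * (A i i).re + ∑ j, ‖A j i‖ ^ 2)
      (by rw [← hsum]; positivity)
    convert this using 2
    ring
  have hnd : ‖(1 + A).det‖ ≤ Real.exp (∑ i, ((A i i).re + (∑ j, ‖A j i‖ ^ 2) / 2)) := by
    calc ‖(1 + A).det‖ ≤ ∏ i, Real.sqrt (∑ j, ‖(1 + A) j i‖ ^ 2) := norm_det_le_prod _
      _ ≤ ∏ i, Real.exp ((A i i).re + (∑ j, ‖A j i‖ ^ 2) / 2) :=
          Finset.prod_le_prod (fun i _ => Real.sqrt_nonneg _) (fun i _ => hcol i)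
      _ = _ := (Real.exp_sum _ _).symm
  have hexp : ‖Complex.exp (-Matrix.trace A)‖ = Real.exp (-∑ i, (A i i).re) := by
    rw [Complex.norm_exp]
    congr 1
    simp [Matrix.trace, Matrix.diag, Complex.re_sum]
  rw [det2, norm_mul, hexp]
  calc ‖(1 + A).det‖ * Real.exp (-∑ i, (A i i).re)
      ≤ Real.exp (∑ i, ((A i i).re + (∑ j, ‖A j i‖ ^ 2) / 2)) * Real.exp (-∑ i, (A i i).re) :=
        mul_le_mul_of_nonneg_right hnd (Real.exp_pos _).le
    _ = Real.exp (∑ i, (∑ j, ‖A j i‖ ^ 2) / 2) := by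
        rw [← Real.exp_add]; congr 1; rw [Finset.sum_add_distrib]; ring
    _ = Real.exp (hsNorm A ^ 2 / 2) := by
        congr 1
        rw [hsNorm_sq, ← Finset.sum_div, Finset.sum_comm]

lemma differentiable_det2_line {n : ℕ} (A C : Matrix (Fin n) (Fin n) ℂ) :
    Differentiable ℂ (fun z : ℂ => det2 (A + z • C)) := by
  classical
  have hent : ∀ i j, Differentiable ℂ (fun z : ℂ => (1 + (A + z • C)) i j) := by
    intro i j
    simp only [Matrix.add_apply, Matrix.smul_apply, smul_eq_mul]
    exact (differentiable_const _).add
      ((differentiable_const _).add (differentiable_id.mul (differentiable_const _)))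
  have hdet : Differentiable ℂ (fun z : ℂ => (1 + (A + z • C)).det) := by
    simp_rw [Matrix.det_apply, Units.smul_def, zsmul_eq_mul]
    apply Differentiable.fun_sum
    intro σ _
    apply (differentiable_const _).mul
    intro z
    exact DifferentiableAt.fun_finsetProd (fun i _ => (hent (σ i) i) z)
  have htr : Differentiable ℂ (fun z : ℂ => Complex.exp (-Matrix.trace (A + z • C))) := by
    apply Complex.differentiable_exp.comp
    apply Differentiable.neg
    simp only [Matrix.trace, Matrix.diag, Matrix.add_apply, Matrix.smul_apply, smul_eq_mul]
    apply Differentiable.fun_sum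
    intro i _
    exact (differentiable_const _).add (differentiable_id.mul (differentiable_const _))
  exact hdet.mul htr

theorem carleman_fredholm_det_lipschitz {n : ℕ} (A B : Matrix (Fin n) (Fin n) ℂ) :
    ‖det2 A - det2 B‖ ≤
      hsNorm (A - B) * Real.exp ((1 / 2) * (hsNorm A + hsNorm B + 1) ^ 2) := by
  set a := hsNorm (A - B) with ha
  by_cases h0 : a = 0
  · have : A = B := by
      have := hsNorm_eq_zero h0
      rwa [sub_eq_zero] at this
    subst this
    simp [h0, ← ha]
  have hapos : 0 < a := lt_of_le_of_ne (hsNorm_nonneg _) (Ne.symm h0)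
  set K := hsNorm A + hsNorm B + 1 with hK
  set E := Real.exp (K ^ 2 / 2) with hE
  set F : ℂ → ℂ := fun z => det2 (A + z • (B - A)) with hF
  have hFdiff : Differentiable ℂ F := differentiable_det2_line A (B - A)
  -- bound on F near the segment
  have hFb : ∀ t : ℝ, t ∈ Set.Icc (0 : ℝ) 1 → ∀ z ∈ Metric.sphere ((t : ℝ) : ℂ) (1 / a),
      ‖F z‖ ≤ E := by
    intro t ht z hz
    have hsplit : A + z • (B - A) =
        (((1 : ℂ) - (t : ℂ)) • A + (t : ℂ) • B) + (z - (t : ℂ)) • (B - A) := by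
      simp only [sub_smul, smul_sub, one_smul]
      abel
    have hnr : hsNorm (A + z • (B - A)) ≤ K := by
      rw [hsplit]
      calc hsNorm ((((1 : ℂ) - (t : ℂ)) • A + (t : ℂ) • B) + (z - (t : ℂ)) • (B - A))
          ≤ hsNorm (((1 : ℂ) - (t : ℂ)) • A + (t : ℂ) • B) +
            hsNorm ((z - (t : ℂ)) • (B - A)) := hsNorm_add_le _ _
        _ ≤ (hsNorm (((1 : ℂ) - (t : ℂ)) • A) + hsNorm ((t : ℂ) • B)) +
            hsNorm ((z - (t : ℂ)) • (B - A)) := by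
            gcongr; exact hsNorm_add_le _ _
        _ ≤ K := by
            rw [hsNorm_smul, hsNorm_smul, hsNorm_smul]
            have h1 : ‖(1 : ℂ) - (t : ℂ)‖ ≤ 1 := by
              rw [show (1 : ℂ) - (t : ℂ) = ((1 - t : ℝ) : ℂ) by push_cast; ring]
              rw [Complex.norm_real, Real.norm_eq_abs, abs_of_nonneg (by linarith [ht.2])]
              linarith [ht.1]
            have h2 : ‖(t : ℂ)‖ ≤ 1 := by
              rw [Complex.norm_real, Real.norm_eq_abs, abs_of_nonneg ht.1]
              exact ht.2
            have h3 : ‖z - (t : ℂ)‖ = 1 / a := by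
              have := Metric.mem_sphere.mp hz
              rwa [Complex.dist_eq] at this
            have hBA : hsNorm (B - A) = a := hsNorm_sub_comm B A
            rw [h3, hBA, hK]
            have e1 : ‖(1 : ℂ) - (t : ℂ)‖ * hsNorm A ≤ hsNorm A :=
              mul_le_of_le_one_left (hsNorm_nonneg _) h1
            have e2 : ‖(t : ℂ)‖ * hsNorm B ≤ hsNorm B :=
              mul_le_of_le_one_left (hsNorm_nonneg _) h2
            have e3 : 1 / a * a = 1 := by field_simp
            linarith
    calc ‖F z‖ ≤ Real.exp (hsNorm (A + z • (B - A)) ^ 2 / 2) := norm_det2_le _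
      _ ≤ E := by
          rw [hE]
          gcongr
          exact hsNorm_nonneg _
  -- Cauchy estimate for the derivative on the segment
  have hderiv : ∀ t : ℝ, t ∈ Set.Icc (0 : ℝ) 1 → ‖deriv F ((t : ℝ) : ℂ)‖ ≤ a * E := by
    intro t ht
    have hR : (0 : ℝ) < 1 / a := by positivity
    have := Complex.norm_deriv_le_of_forall_mem_sphere_norm_le hR
      (hFdiff.diffContOnCl) (hFb t ht)
    calc ‖deriv F ((t : ℝ) : ℂ)‖ ≤ E / (1 / a) := this
      _ = a * E := by field_simp
  -- mean value inequality along the segment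
  have hmvt : ‖F 1 - F 0‖ ≤ a * E := by
    have hg : ∀ x ∈ Set.Icc (0 : ℝ) 1,
        HasDerivWithinAt (fun t : ℝ => F t) (deriv F ((x : ℝ) : ℂ)) (Set.Icc 0 1) x := by
      intro x _
      exact ((hFdiff ((x : ℝ) : ℂ)).hasDerivAt.comp_ofReal).hasDerivWithinAt
    have := norm_image_sub_le_of_norm_deriv_le_segment' hg
      (fun x hx => hderiv x (Set.mem_Icc_of_Ico hx)) 1 (Set.right_mem_Icc.mpr zero_le_one)
    simpa using this
  have hF1 : F 1 = det2 B := by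
    rw [hF]; simp
  have hF0 : F 0 = det2 A := by
    rw [hF]; simp
  rw [hF1, hF0] at hmvt
  calc ‖det2 A - det2 B‖ = ‖det2 B - det2 A‖ := norm_sub_rev _ _
    _ ≤ a * E := hmvt
    _ = hsNorm (A - B) * Real.exp ((1 / 2) * K ^ 2) := by
        rw [ha, hE]; ring_nf
    _ = _ := by rw [hK]
end

section
/- Let K: ℝ → ℝ be a C¹ function with ‖K‖_∞ ≤ Cn and ‖K′‖_∞ ≤ Cn², and let ρ_t(x₁,…,x_t) = det(K(x_i − x_j))_{1≤i,j≤t}. If all points x₁,…,x_t lie in an interval of length c_n, then |ρ_t(x₁,…,x_t)| ≤ C' n^{2t−1} c_n^{t−1} for a constant C' depending only on C and t. -/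
open Matrix

theorem clustered_correlation_determinant_bound (C : ℝ) (hC : 0 < C) (t : ℕ) (ht : 1 ≤ t) :
    ∃ C' : ℝ, 0 < C' ∧
      ∀ (n : ℕ), 1 ≤ n → ∀ (c : ℝ), 0 < c → ∀ (K : ℝ → ℝ),
        ContDiff ℝ 1 K →
        (∀ x : ℝ, |K x| ≤ C * n) →
        (∀ x : ℝ, |deriv K x| ≤ C * n ^ 2) →
        ∀ (x : Fin t → ℝ), (∃ a : ℝ, ∀ i, x i ∈ Set.Icc a (a + c)) →
          |Matrix.det (Matrix.of fun i j : Fin t => K (x i - x j))| ≤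
            C' * (n : ℝ) ^ (2 * t - 1) * c ^ (t - 1) := by
  obtain ⟨s, rfl⟩ : ∃ s, t = s + 1 := ⟨t - 1, (Nat.succ_pred_eq_of_pos ht).symm⟩
  refine ⟨(s + 1).factorial * C ^ (s + 1), by positivity, ?_⟩
  intro n hn c hc K hK hKb hK'b x ⟨a, hx⟩
  -- K is (C * n^2)-Lipschitz
  have hlip : ∀ u v : ℝ, |K u - K v| ≤ C * n ^ 2 * |u - v| := by
    intro u v
    have := Convex.norm_image_sub_le_of_norm_deriv_le
      (f := K) (s := Set.univ)
      (fun y _ => (hK.differentiable one_ne_zero) y)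
      (fun y _ => by simpa [Real.norm_eq_abs] using hK'b y) convex_univ
      (Set.mem_univ v) (Set.mem_univ u)
    simpa [Real.norm_eq_abs] using this
  set N : Matrix (Fin (s + 1)) (Fin (s + 1)) ℝ :=
    Matrix.of (fun i j => if i = 0 then K (x 0 - x j)
      else K (x i - x j) - K (x 0 - x j)) with hN
  have hdet : (Matrix.of fun i j : Fin (s + 1) => K (x i - x j)).det = N.det := by
    refine Matrix.det_eq_of_forall_row_eq_smul_add_const
      (fun i => if i = 0 then 0 else 1) 0 (by simp) ?_
    intro i j
    by_cases hi : i = 0 <;> simp [hN, hi]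
  -- row bounds
  set B : Fin (s + 1) → ℝ := fun i => if i = 0 then C * n else C * n ^ 2 * c with hBdef
  have hB0 : ∀ i, 0 ≤ B i := by
    intro i
    simp only [hBdef]
    split <;> positivity
  have hB : ∀ i j, |N i j| ≤ B i := by
    intro i j
    by_cases hi : i = 0
    · simpa [hN, hBdef, hi] using hKb (x 0 - x j)
    · simp only [hN, hBdef, Matrix.of_apply, if_neg hi]
      have h1 := hlip (x i - x j) (x 0 - x j)
      have h2 : |x i - x j - (x 0 - x j)| ≤ c := by
        have hxi := hx i
        have hx0 := hx 0
        rw [Set.mem_Icc] at hxi hx0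
        rw [abs_le]
        constructor <;> nlinarith [hxi.1, hxi.2, hx0.1, hx0.2]
      calc |K (x i - x j) - K (x 0 - x j)| ≤ C * n ^ 2 * |x i - x j - (x 0 - x j)| := h1
        _ ≤ C * n ^ 2 * c := by
            apply mul_le_mul_of_nonneg_left h2 (by positivity)
  have hprodB : ∏ i, B i = C * n * (C * n ^ 2 * c) ^ s := by
    rw [Fin.prod_univ_succ]
    simp [hBdef, Fin.succ_ne_zero]
  have hdet_le : |N.det| ≤ (s + 1).factorial * (C * n * (C * n ^ 2 * c) ^ s) := by
    rw [Matrix.det_apply]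
    calc |∑ σ : Equiv.Perm (Fin (s + 1)), Equiv.Perm.sign σ • ∏ i, N (σ i) i|
        ≤ ∑ σ : Equiv.Perm (Fin (s + 1)), |Equiv.Perm.sign σ • ∏ i, N (σ i) i| :=
          Finset.abs_sum_le_sum_abs _ _
      _ ≤ ∑ _σ : Equiv.Perm (Fin (s + 1)), ∏ i, B i := by
          refine Finset.sum_le_sum fun σ _ => ?_
          have habs : |Equiv.Perm.sign σ • ∏ i, N (σ i) i| = |∏ i, N (σ i) i| :=
            AbsoluteValue.map_units_int_smul AbsoluteValue.abs _ _
          rw [habs]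
          have h1 : |∏ i, N (σ i) i| ≤ ∏ i, B (σ i) := by
            rw [Finset.abs_prod]
            exact Finset.prod_le_prod (fun i _ => abs_nonneg _) (fun i _ => hB (σ i) i)
          have h2 : ∏ i, B (σ i) = ∏ i, B i := Equiv.prod_comp σ B
          exact h2 ▸ h1
      _ = (s + 1).factorial * (∏ i, B i) := by
          rw [Finset.sum_const, Finset.card_univ, Fintype.card_perm, Fintype.card_fin,
            nsmul_eq_mul]
      _ = (s + 1).factorial * (C * n * (C * n ^ 2 * c) ^ s) := by rw [hprodB]
  rw [hdet]
  refine hdet_le.trans (le_of_eq ?_)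
  have h1 : 2 * (s + 1) - 1 = 2 * s + 1 := by omega
  have h2 : s + 1 - 1 = s := by omega
  rw [h1, h2]
  ring
end

section
/- For a 3×3 determinant with columns bounded in Euclidean norm by Cn, Cn²c, Cn²c respectively (where c > 0), the determinant is bounded in absolute value by C³ n⁵ c². Consequently, if K: ℝ → ℝ satisfies ‖K‖_∞ ≤ Cn and ‖K′‖_∞ ≤ Cn², then for 0 ≤ x₁, x₂ ≤ c, the determinant det₃ₓ₃ of the matrix with rows (K(0), K(x₁)−K(0), K(x₂)−K(0)), (K(x₁), K(0)−K(x₁), K(x₁−x₂)−K(x₁)), (K(x₂), K(x₁−x₂)−K(x₂), K(0)−K(x₂)) is O(n⁵c²). -/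
open Matrix

private lemma lagrange_cube (a0 a1 a2 b0 b1 b2 c0 c1 c2 : ℝ) :
    (a0*(b1*c2 - c1*b2) - b0*(a1*c2 - c1*a2) + c0*(a1*b2 - b1*a2))^2 ≤
      (a0^2+a1^2+a2^2) * ((b0^2+b1^2+b2^2) * (c0^2+c1^2+c2^2)) := by
  set p0 : ℝ := b1*c2 - b2*c1 with hp0
  set p1 : ℝ := b2*c0 - b0*c2 with hp1
  set p2 : ℝ := b0*c1 - b1*c0 with hp2
  have h1 : (a0*p0 + a1*p1 + a2*p2)^2 ≤ (a0^2+a1^2+a2^2) * (p0^2+p1^2+p2^2) := by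
    nlinarith [sq_nonneg (a0*p1 - a1*p0), sq_nonneg (a0*p2 - a2*p0), sq_nonneg (a1*p2 - a2*p1)]
  have h2 : p0^2+p1^2+p2^2 ≤ (b0^2+b1^2+b2^2) * (c0^2+c1^2+c2^2) := by
    rw [hp0, hp1, hp2]
    nlinarith [sq_nonneg (b0*c0 + b1*c1 + b2*c2)]
  have hA : (0:ℝ) ≤ a0^2+a1^2+a2^2 := by positivity
  have hEq : a0*(b1*c2 - c1*b2) - b0*(a1*c2 - c1*a2) + c0*(a1*b2 - b1*a2)
      = a0*p0 + a1*p1 + a2*p2 := by rw [hp0, hp1, hp2]; ring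
  rw [hEq]
  calc (a0*p0 + a1*p1 + a2*p2)^2 ≤ (a0^2+a1^2+a2^2) * (p0^2+p1^2+p2^2) := h1
    _ ≤ (a0^2+a1^2+a2^2) * ((b0^2+b1^2+b2^2) * (c0^2+c1^2+c2^2)) :=
        mul_le_mul_of_nonneg_left h2 hA

private lemma hadamard3 (M : Matrix (Fin 3) (Fin 3) ℝ) :
    |M.det| ≤ Real.sqrt (∑ i, (M i 0) ^ 2) * Real.sqrt (∑ i, (M i 1) ^ 2) *
      Real.sqrt (∑ i, (M i 2) ^ 2) := by
  have hA : (0:ℝ) ≤ ∑ i, (M i 0) ^ 2 := Finset.sum_nonneg fun _ _ => sq_nonneg _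
  have hB : (0:ℝ) ≤ ∑ i, (M i 1) ^ 2 := Finset.sum_nonneg fun _ _ => sq_nonneg _
  rw [mul_assoc, ← Real.sqrt_mul hB, ← Real.sqrt_mul hA, ← Real.sqrt_sq_eq_abs]
  apply Real.sqrt_le_sqrt
  rw [Matrix.det_fin_three]
  simp only [Fin.sum_univ_three]
  have := lagrange_cube (M 0 0) (M 1 0) (M 2 0) (M 0 1) (M 1 1) (M 2 1) (M 0 2) (M 1 2) (M 2 2)
  nlinarith [this]

private lemma det_col_bound (D : ℝ) (hD : 0 ≤ D) (n : ℕ) (c : ℝ) (hc : 0 < c)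
    (M : Matrix (Fin 3) (Fin 3) ℝ)
    (h0 : Real.sqrt (∑ i, (M i 0) ^ 2) ≤ D * n)
    (h1 : Real.sqrt (∑ i, (M i 1) ^ 2) ≤ D * n ^ 2 * c)
    (h2 : Real.sqrt (∑ i, (M i 2) ^ 2) ≤ D * n ^ 2 * c) :
    |M.det| ≤ D ^ 3 * (n : ℝ) ^ 5 * c ^ 2 := by
  have hs0 : (0:ℝ) ≤ Real.sqrt (∑ i, (M i 0) ^ 2) := Real.sqrt_nonneg _
  have hs1 : (0:ℝ) ≤ Real.sqrt (∑ i, (M i 1) ^ 2) := Real.sqrt_nonneg _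
  have hs2 : (0:ℝ) ≤ Real.sqrt (∑ i, (M i 2) ^ 2) := Real.sqrt_nonneg _
  have hn : (0:ℝ) ≤ (n : ℝ) := Nat.cast_nonneg n
  have hb : (0:ℝ) ≤ D * n ^ 2 * c := by positivity
  calc |M.det| ≤ Real.sqrt (∑ i, (M i 0) ^ 2) * Real.sqrt (∑ i, (M i 1) ^ 2) *
      Real.sqrt (∑ i, (M i 2) ^ 2) := hadamard3 M
    _ ≤ (D * n) * (D * n ^ 2 * c) * (D * n ^ 2 * c) := by
        apply mul_le_mul (mul_le_mul h0 h1 hs1 (by positivity)) h2 hs2 (by positivity)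
    _ = D ^ 3 * (n : ℝ) ^ 5 * c ^ 2 := by ring

theorem three_by_three_determinant_column_bound (C : ℝ) (hC : 0 < C) :
    -- Hadamard-type bound: columns of Euclidean norm at most `Cn, Cn²c, Cn²c`
    (∀ (n : ℕ) (c : ℝ), 0 < c → ∀ M : Matrix (Fin 3) (Fin 3) ℝ,
      Real.sqrt (∑ i, (M i 0) ^ 2) ≤ C * n →
      Real.sqrt (∑ i, (M i 1) ^ 2) ≤ C * n ^ 2 * c →
      Real.sqrt (∑ i, (M i 2) ^ 2) ≤ C * n ^ 2 * c →
      |M.det| ≤ C ^ 3 * (n : ℝ) ^ 5 * c ^ 2) ∧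
    -- consequence for the three-point correlation determinant
    ∃ C' : ℝ, 0 < C' ∧
      ∀ (n : ℕ) (c : ℝ), 0 < c → ∀ (K : ℝ → ℝ),
        (∀ x : ℝ, |K x| ≤ C * n) →
        (∀ x : ℝ, |deriv K x| ≤ C * n ^ 2) →
        ContDiff ℝ 1 K →
        ∀ x₁ x₂ : ℝ, 0 ≤ x₁ → x₁ ≤ c → 0 ≤ x₂ → x₂ ≤ c →
          |Matrix.det (Matrix.of fun i j : Fin 3 =>
            ![![K 0, K x₁ - K 0, K x₂ - K 0],
              ![K x₁, K 0 - K x₁, K (x₁ - x₂) - K x₁],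
              ![K x₂, K (x₁ - x₂) - K x₂, K 0 - K x₂]] i j)| ≤
            C' * (n : ℝ) ^ 5 * c ^ 2 := by
  constructor
  · intro n c hc M h0 h1 h2
    exact det_col_bound C hC.le n c hc M h0 h1 h2
  · refine ⟨64 * C ^ 3, by positivity, ?_⟩
    intro n c hc K hK hK' hKd x₁ x₂ hx₁0 hx₁c hx₂0 hx₂c
    set M : Matrix (Fin 3) (Fin 3) ℝ := Matrix.of fun i j : Fin 3 =>
      ![![K 0, K x₁ - K 0, K x₂ - K 0],
        ![K x₁, K 0 - K x₁, K (x₁ - x₂) - K x₁],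
        ![K x₂, K (x₁ - x₂) - K x₂, K 0 - K x₂]] i j with hM
    have key := det_col_bound (4 * C) (by positivity) n c hc M
    have hn : (0:ℝ) ≤ (n : ℝ) := Nat.cast_nonneg n
    -- Lipschitz bound from the derivative bound
    have lip : ∀ u v : ℝ, |K u - K v| ≤ C * n ^ 2 * |u - v| := by
      intro u v
      have := convex_univ.norm_image_sub_le_of_norm_deriv_le
        (f := K) (C := C * n ^ 2)
        (fun x _ => (hKd.differentiable one_ne_zero).differentiableAt)
        (fun x _ => by simpa using hK' x) (Set.mem_univ v) (Set.mem_univ u)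
      simpa using this
    have hCn2 : (0:ℝ) ≤ C * n ^ 2 := by positivity
    -- entry bounds for columns 1 and 2: each entry is at most 2*C*n²*c in abs
    have eb : ∀ u v : ℝ, |u - v| ≤ 2 * c → |K u - K v| ≤ 2 * C * n ^ 2 * c := by
      intro u v huv
      calc |K u - K v| ≤ C * n ^ 2 * |u - v| := lip u v
        _ ≤ C * n ^ 2 * (2 * c) := mul_le_mul_of_nonneg_left huv hCn2
        _ = 2 * C * n ^ 2 * c := by ring
    have sqrt3 : ∀ e0 e1 e2 B : ℝ, 0 ≤ B → |e0| ≤ B → |e1| ≤ B → |e2| ≤ B →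
        Real.sqrt (e0 ^ 2 + e1 ^ 2 + e2 ^ 2) ≤ 2 * B := by
      intro e0 e1 e2 B hB h0 h1 h2
      have : e0 ^ 2 + e1 ^ 2 + e2 ^ 2 ≤ (2 * B) ^ 2 := by
        nlinarith [abs_nonneg e0, abs_nonneg e1, abs_nonneg e2, sq_abs e0, sq_abs e1, sq_abs e2]
      calc Real.sqrt (e0 ^ 2 + e1 ^ 2 + e2 ^ 2) ≤ Real.sqrt ((2 * B) ^ 2) :=
            Real.sqrt_le_sqrt this
        _ = 2 * B := Real.sqrt_sq (by linarith)
    have col0 : Real.sqrt (∑ i, (M i 0) ^ 2) ≤ 4 * C * n := by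
      have : (∑ i, (M i 0) ^ 2) = (K 0) ^ 2 + (K x₁) ^ 2 + (K x₂) ^ 2 := by
        simp [hM, Fin.sum_univ_three]
      rw [this]
      have h := sqrt3 (K 0) (K x₁) (K x₂) (C * n) (by positivity) (hK 0) (hK x₁) (hK x₂)
      calc Real.sqrt ((K 0) ^ 2 + (K x₁) ^ 2 + (K x₂) ^ 2) ≤ 2 * (C * n) := h
        _ ≤ 4 * C * n := by nlinarith
    have habs : ∀ u v : ℝ, 0 ≤ u → u ≤ c → 0 ≤ v → v ≤ c → |u - v| ≤ 2 * c := by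
      intro u v h1 h2 h3 h4
      rw [abs_le]; constructor <;> linarith
    have e10 : |K x₁ - K 0| ≤ 2 * C * n ^ 2 * c := eb x₁ 0 (by rw [sub_zero, abs_of_nonneg hx₁0]; linarith)
    have e11 : |K 0 - K x₁| ≤ 2 * C * n ^ 2 * c := eb 0 x₁ (by rw [zero_sub, abs_neg, abs_of_nonneg hx₁0]; linarith)
    have e12 : |K (x₁ - x₂) - K x₂| ≤ 2 * C * n ^ 2 * c := by
      apply eb
      have : |x₁ - x₂ - x₂| = |x₁ - 2 * x₂| := by ring_nf
      rw [abs_le]; constructor <;> linarith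
    have e20 : |K x₂ - K 0| ≤ 2 * C * n ^ 2 * c := eb x₂ 0 (by rw [sub_zero, abs_of_nonneg hx₂0]; linarith)
    have e21 : |K (x₁ - x₂) - K x₁| ≤ 2 * C * n ^ 2 * c := by
      apply eb
      have h : x₁ - x₂ - x₁ = -x₂ := by ring
      rw [h, abs_neg, abs_of_nonneg hx₂0]; linarith
    have e22 : |K 0 - K x₂| ≤ 2 * C * n ^ 2 * c := eb 0 x₂ (by rw [zero_sub, abs_neg, abs_of_nonneg hx₂0]; linarith)
    have hB2 : (0:ℝ) ≤ 2 * C * n ^ 2 * c := by positivity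
    have col1 : Real.sqrt (∑ i, (M i 1) ^ 2) ≤ 4 * C * n ^ 2 * c := by
      have hsum : (∑ i, (M i 1) ^ 2) =
          (K x₁ - K 0) ^ 2 + (K 0 - K x₁) ^ 2 + (K (x₁ - x₂) - K x₂) ^ 2 := by
        simp [hM, Fin.sum_univ_three]
      rw [hsum]
      have h := sqrt3 _ _ _ _ hB2 e10 e11 e12
      calc Real.sqrt _ ≤ 2 * (2 * C * n ^ 2 * c) := h
        _ = 4 * C * n ^ 2 * c := by ring
    have col2 : Real.sqrt (∑ i, (M i 2) ^ 2) ≤ 4 * C * n ^ 2 * c := by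
      have hsum : (∑ i, (M i 2) ^ 2) =
          (K x₂ - K 0) ^ 2 + (K (x₁ - x₂) - K x₁) ^ 2 + (K 0 - K x₂) ^ 2 := by
        simp [hM, Fin.sum_univ_three]
      rw [hsum]
      have h := sqrt3 _ _ _ _ hB2 e20 e21 e22
      calc Real.sqrt _ ≤ 2 * (2 * C * n ^ 2 * c) := h
        _ = 4 * C * n ^ 2 * c := by ring
    have := key (by simpa [mul_comm, mul_assoc, mul_left_comm] using col0)
      (by simpa [mul_comm, mul_assoc, mul_left_comm] using col1)
      (by simpa [mul_comm, mul_assoc, mul_left_comm] using col2)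
    calc |M.det| ≤ (4 * C) ^ 3 * (n : ℝ) ^ 5 * c ^ 2 := this
      _ = 64 * C ^ 3 * (n : ℝ) ^ 5 * c ^ 2 := by ring
end
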